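/- For every nonzero complex number t, the 12×7 complex matrix A(t, −t⁻¹, −t⁻¹, t, t², −1, t⁻²) has rank at most 5. Consequently (since the product t·(−t⁻¹)·(−t⁻¹)·t·t²·(−1)·t⁻²·(−1) equals 1), every point of the translated torus C = {(t, −t⁻¹, −t⁻¹, t, t², −1, t⁻², −1) : t ∈ ℂ*} lies in the first characteristic variety V₁(D). -/

import Mathlib

open Matrix

/-- The Alexander matrix of the fundamental group of the complement of the
deconed deleted B₃ arrangement, evaluated at `(t₁, …, t₇)`. -/
noncomputable def alexD (t₁ t₂ t₃ t₄ t₅ t₆ t₇ : ℂ) : Matrix (Fin 12) (Fin 7) ℂ :=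
  !![1 - t₅, 0, 0, 0, t₁ - 1, 0, 0;
     0, t₅ * (t₃ - 1), 1 - t₂ * t₅, 0, t₃ - 1, 0, 0;
     0, 1 - t₅, t₂ * (1 - t₅), 0, t₂ * t₃ - 1, 0, 0;
     0, 0, 0, 1 - t₅, t₄ - 1, 0, 0;
     t₆ * (t₃ - 1), (t₃ - 1) * (t₁ * t₆ - 1), t₂ * (1 - t₁ * t₆), 0, 0, t₃ - 1, 0;
     1 - t₆, t₁ * (t₃ - 1) * (t₆ - 1), t₁ * t₂ * (1 - t₆), 0, 0, t₁ * t₃ - 1, 0;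
     0, t₆ * (t₄ - 1), 0, 1 - t₂ * t₆, 0, t₄ - 1, 0;
     0, 1 - t₆, 0, t₂ * (1 - t₆), 0, t₂ * t₄ - 1, 0;
     t₇ * (t₄ - 1), (t₄ - 1) * (t₁ * t₇ - 1), 0, t₂ * (1 - t₁ * t₇), 0, 0, t₄ - 1;
     1 - t₇, t₁ * (1 - t₇), 0, t₁ * t₂ * (1 - t₇), 0, 0, t₁ * t₂ * t₄ - 1;
     0, 1 - t₇, 0, 0, 0, 0, t₂ - 1;
     0, 0, 1 - t₇, (t₃ - 1) * (1 - t₇), 0, 0, t₄ * (t₃ - 1)]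

/-- The `d`-th characteristic variety of the deleted B₃ arrangement `D`:
points `x` of the algebraic torus `(ℂ*)⁸` such that `(x₁,…,x₇) ∈ V_d(D*)`,
i.e. `rank A(x₁,…,x₇) < 7 - d`, and `x₁x₂⋯x₈ = 1`. -/
noncomputable def VD (d : ℕ) : Set (Fin 8 → ℂ) :=
  {x | (∀ i, x i ≠ 0) ∧
       (alexD (x 0) (x 1) (x 2) (x 3) (x 4) (x 5) (x 6)).rank < 7 - d ∧
       x 0 * x 1 * x 2 * x 3 * x 4 * x 5 * x 6 * x 7 = 1}

lemma vec8_five {α : Type*} (a b c d e f g h : α) : (![a,b,c,d,e,f,g,h] : Fin 8 → α) 5 = f := rfl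

lemma vec8_six {α : Type*} (a b c d e f g h : α) : (![a,b,c,d,e,f,g,h] : Fin 8 → α) 6 = g := rfl

lemma vec8_seven {α : Type*} (a b c d e f g h : α) : (![a,b,c,d,e,f,g,h] : Fin 8 → α) 7 = h := rfl

lemma vec7_five {α : Type*} (a b c d e f g : α) : (![a,b,c,d,e,f,g] : Fin 7 → α) 5 = f := rfl

lemma vec7_six {α : Type*} (a b c d e f g : α) : (![a,b,c,d,e,f,g] : Fin 7 → α) 6 = g := rfl

set_option maxHeartbeats 2000000 in
lemma alexD_rank_le (t : ℂ) (ht : t ≠ 0) :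
    (alexD t (-t⁻¹) (-t⁻¹) t (t ^ 2) (-1) ((t ^ 2)⁻¹)).rank ≤ 5 := by
  set A := alexD t (-t⁻¹) (-t⁻¹) t (t ^ 2) (-1) ((t ^ 2)⁻¹) with hA
  set v1 : Fin 7 → ℂ := ![-t, 0, -(t + 1), -t, -(t * (t + 1)), 1, 0] with hv1
  set v2 : Fin 7 → ℂ := ![t ^ 2, t, 2 * t ^ 2 + t, t ^ 2, t ^ 3 + t ^ 2, 0, t - 1] with hv2
  have h1 : A.mulVecLin v1 = 0 := by
    rw [Matrix.mulVecLin_apply]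
    show (alexD t (-t⁻¹) (-t⁻¹) t (t ^ 2) (-1) ((t ^ 2)⁻¹)).mulVec v1 = 0
    rw [alexD, hv1]
    simp only [Matrix.cons_mulVec, Matrix.empty_mulVec, Matrix.cons_dotProduct,
      Matrix.dotProduct_of_isEmpty, Matrix.head_cons, Matrix.tail_cons,
      Matrix.cons_eq_zero_iff, Matrix.zero_empty, and_true]
    refine ⟨?_, ?_, ?_, ?_, ?_, ?_, ?_, ?_, ?_, ?_, ?_, ?_⟩ <;>
      · field_simp
        try ring
  have h2 : A.mulVecLin v2 = 0 := by
    rw [Matrix.mulVecLin_apply]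
    show (alexD t (-t⁻¹) (-t⁻¹) t (t ^ 2) (-1) ((t ^ 2)⁻¹)).mulVec v2 = 0
    rw [alexD, hv2]
    simp only [Matrix.cons_mulVec, Matrix.empty_mulVec, Matrix.cons_dotProduct,
      Matrix.dotProduct_of_isEmpty, Matrix.head_cons, Matrix.tail_cons,
      Matrix.cons_eq_zero_iff, Matrix.zero_empty, and_true]
    refine ⟨?_, ?_, ?_, ?_, ?_, ?_, ?_, ?_, ?_, ?_, ?_, ?_⟩ <;>
      · field_simp
        try ring
  have hli : LinearIndependent ℂ ![v1, v2] := by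
    rw [LinearIndependent.pair_iff]
    intro s r hsr
    have h5 := congrFun hsr 5
    have h1' := congrFun hsr 1
    simp [hv1, hv2, vec7_five, vec7_six, ht] at h5 h1'
    exact ⟨h5, by tauto⟩
  have hsp : Submodule.span ℂ (Set.range ![v1, v2]) ≤ LinearMap.ker A.mulVecLin := by
    rw [Submodule.span_le]
    rintro x ⟨i, rfl⟩
    fin_cases i
    · simpa using h1
    · simpa using h2
  have hk2 : 2 ≤ Module.finrank ℂ (LinearMap.ker A.mulVecLin) := by
    have := finrank_span_eq_card hli
    calc 2 = Module.finrank ℂ (Submodule.span ℂ (Set.range ![v1, v2])) := by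
            rw [this]; simp
      _ ≤ Module.finrank ℂ (LinearMap.ker A.mulVecLin) := Submodule.finrank_mono hsp
  have hrn := LinearMap.finrank_range_add_finrank_ker A.mulVecLin
  have hdom : Module.finrank ℂ (Fin 7 → ℂ) = 7 := by simp
  rw [hdom] at hrn
  have : A.rank = Module.finrank ℂ (LinearMap.range A.mulVecLin) := rfl
  omega

/-- every point of the translated torus
`C = {(t, −t⁻¹, −t⁻¹, t, t², −1, t⁻², −1) : t ∈ ℂ*}` gives an Alexander matrix of
rank at most 5, and hence lies in the first characteristic variety `V₁(D)`. -/
theorem translated_torus_in_V1 (t : ℂ) (ht : t ≠ 0) :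
    (alexD t (-t⁻¹) (-t⁻¹) t (t ^ 2) (-1) ((t ^ 2)⁻¹)).rank ≤ 5 ∧
    (![t, -t⁻¹, -t⁻¹, t, t ^ 2, -1, (t ^ 2)⁻¹, -1] : Fin 8 → ℂ) ∈ VD 1 := by
  have hrk := alexD_rank_le t ht
  refine ⟨hrk, ?_, ?_, ?_⟩
  · intro i
    fin_cases i <;>
      simp [ht, vec8_five, vec8_six, vec8_seven, pow_eq_zero_iff]
  · show (alexD t (-t⁻¹) (-t⁻¹) t (t ^ 2) (-1) ((t ^ 2)⁻¹)).rank < 7 - 1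
    omega
  · show t * (-t⁻¹) * (-t⁻¹) * t * t ^ 2 * (-1) * (t ^ 2)⁻¹ * (-1) = 1
    field_simp
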